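/- Let μ be three times continuously differentiable on [0,1]. Then there exist constants C > 0 and R > e such that for every p ∈ ℂ ∖ (−∞,0] with |p| ≥ R one has |K(p) − μ(1)/Log p + μ′(1)/(Log p)²| ≤ C (log|p|)^{−3}, where Log is the principal branch of the logarithm; that is, K(p) = μ(1)/Log p − μ′(1)/(Log p)² + O((log|p|)^{−3}) as |p| → ∞ in ℂ ∖ (−∞,0]. -/

import Mathlib

open MeasureTheory Filter Set

private lemma gderiv (L : ℂ) (α : ℝ) :
    HasDerivAt (fun α : ℝ => Complex.exp (((α : ℂ) - 1) * L))
      (L * Complex.exp (((α : ℂ) - 1) * L)) α := by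
  have h1 : HasDerivAt (fun α : ℝ => ((α : ℂ) - 1) * L) L α := by
    simpa using (((hasDerivAt_id α).ofReal_comp.sub_const 1).mul_const L)
  simpa [mul_comm] using h1.cexp

private lemma gcont (L : ℂ) :
    Continuous (fun α : ℝ => Complex.exp (((α : ℂ) - 1) * L)) :=
  Complex.continuous_exp.comp
    ((Complex.continuous_ofReal.sub continuous_const).mul continuous_const)

private lemma ibp_step (f f' : ℝ → ℝ) (L : ℂ)
    (hf : ∀ α ∈ Set.Icc (0:ℝ) 1, HasDerivWithinAt f (f' α) (Set.Icc 0 1) α)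
    (hfc : ContinuousOn f (Set.Icc 0 1)) (hf'c : ContinuousOn f' (Set.Icc 0 1)) :
    L * ∫ α in (0:ℝ)..1, Complex.exp (((α : ℂ) - 1) * L) * (f α : ℂ)
      = (f 1 : ℂ) - Complex.exp (-L) * (f 0 : ℂ)
        - ∫ α in (0:ℝ)..1, Complex.exp (((α : ℂ) - 1) * L) * (f' α : ℂ) := by
  set g : ℝ → ℂ := fun α => Complex.exp (((α : ℂ) - 1) * L) with hg_def
  have hgc : Continuous g := gcont L
  have hfC : ContinuousOn (fun α : ℝ => (f α : ℂ)) (Set.Icc 0 1) :=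
    Complex.continuous_ofReal.comp_continuousOn hfc
  have hf'C : ContinuousOn (fun α : ℝ => (f' α : ℂ)) (Set.Icc 0 1) :=
    Complex.continuous_ofReal.comp_continuousOn hf'c
  have i1 : IntervalIntegrable (fun α => g α * (f α : ℂ)) volume 0 1 := by
    apply ContinuousOn.intervalIntegrable
    rw [Set.uIcc_of_le zero_le_one]
    exact hgc.continuousOn.mul hfC
  have i2 : IntervalIntegrable (fun α => g α * (f' α : ℂ)) volume 0 1 := by
    apply ContinuousOn.intervalIntegrable
    rw [Set.uIcc_of_le zero_le_one]
    exact hgc.continuousOn.mul hf'C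
  have key : (∫ α in (0:ℝ)..1, (L * (g α * (f α : ℂ)) + g α * (f' α : ℂ)))
      = g 1 * (f 1 : ℂ) - g 0 * (f 0 : ℂ) := by
    apply intervalIntegral.integral_eq_sub_of_hasDeriv_right_of_le
      (f := fun α => g α * (f α : ℂ)) zero_le_one
    · exact hgc.continuousOn.mul hfC
    · intro α hα
      have hfα : HasDerivAt f (f' α) α :=
        (hf α (Set.Ioo_subset_Icc_self hα)).hasDerivAt (Icc_mem_nhds hα.1 hα.2)
      have h2 : HasDerivAt (fun α => g α * (f α : ℂ))
          (L * g α * (f α : ℂ) + g α * (f' α : ℂ)) α := (gderiv L α).mul hfα.ofReal_comp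
      refine HasDerivAt.hasDerivWithinAt ?_
      exact h2.congr_deriv (by ring)
    · exact (i1.const_mul L).add i2
  rw [intervalIntegral.integral_add (i1.const_mul L) i2,
    intervalIntegral.integral_const_mul] at key
  have hg1 : g 1 = 1 := by simp [hg_def]
  have hg0 : g 0 = Complex.exp (-L) := by
    simp only [hg_def, Complex.ofReal_zero, zero_sub, neg_mul, one_mul]
  rw [hg1, hg0] at key
  linear_combination key

private lemma norm_g (L : ℂ) (α : ℝ) :
    ‖Complex.exp (((α : ℂ) - 1) * L)‖ = Real.exp ((α - 1) * L.re) := by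
  rw [Complex.norm_exp]
  congr 1
  have h : ((α : ℂ) - 1) = ((α - 1 : ℝ) : ℂ) := by push_cast; ring
  rw [h, Complex.re_ofReal_mul]

private lemma exp_integral_bound {x : ℝ} (hx : 0 < x) :
    (∫ α in (0:ℝ)..1, Real.exp ((α - 1) * x)) ≤ 1 / x := by
  have key : (∫ α in (0:ℝ)..1, Real.exp ((α - 1) * x))
      = Real.exp ((1 - 1) * x) / x - Real.exp ((0 - 1) * x) / x := by
    apply intervalIntegral.integral_eq_sub_of_hasDerivAt
      (f := fun α : ℝ => Real.exp ((α - 1) * x) / x)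
    · intro α _
      have h : HasDerivAt (fun α : ℝ => Real.exp ((α - 1) * x) / x)
          (Real.exp ((α - 1) * x) * (1 * x) / x) α :=
        (((hasDerivAt_id α).sub_const 1).mul_const x).exp.div_const x
      exact h.congr_deriv (by field_simp)
    · apply Continuous.intervalIntegrable
      exact Real.continuous_exp.comp ((continuous_id.sub continuous_const).mul continuous_const)
  rw [key]
  have h1 : Real.exp ((1 - 1) * x) = 1 := by norm_num
  rw [h1]
  have h2 : 0 < Real.exp ((0 - 1) * x) / x := by positivity
  linarith

private lemma integral_norm_bound (h : ℝ → ℝ) (M : ℝ) (L : ℂ) (hx : 0 < L.re)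
    (hc : ContinuousOn h (Set.Icc 0 1))
    (hM : ∀ α ∈ Set.Icc (0:ℝ) 1, |h α| ≤ M) :
    ‖∫ α in (0:ℝ)..1, Complex.exp (((α : ℂ) - 1) * L) * (h α : ℂ)‖
      ≤ M / L.re := by
  have hM0 : 0 ≤ M := le_trans (abs_nonneg _) (hM 0 (by norm_num))
  have hC : ContinuousOn (fun α : ℝ => (h α : ℂ)) (Set.Icc 0 1) :=
    Complex.continuous_ofReal.comp_continuousOn hc
  have iA : IntervalIntegrable
      (fun α => ‖Complex.exp (((α : ℂ) - 1) * L) * (h α : ℂ)‖) volume 0 1 := by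
    apply ContinuousOn.intervalIntegrable
    rw [Set.uIcc_of_le zero_le_one]
    exact ((gcont L).continuousOn.mul hC).norm
  have iB : IntervalIntegrable (fun α => Real.exp ((α - 1) * L.re) * M) volume 0 1 := by
    apply Continuous.intervalIntegrable
    exact (Real.continuous_exp.comp
      ((continuous_id.sub continuous_const).mul continuous_const)).mul continuous_const
  calc ‖∫ α in (0:ℝ)..1, Complex.exp (((α : ℂ) - 1) * L) * (h α : ℂ)‖
      ≤ ∫ α in (0:ℝ)..1, ‖Complex.exp (((α : ℂ) - 1) * L) * (h α : ℂ)‖ :=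
        intervalIntegral.norm_integral_le_integral_norm zero_le_one
    _ ≤ ∫ α in (0:ℝ)..1, Real.exp ((α - 1) * L.re) * M := by
        apply intervalIntegral.integral_mono_on zero_le_one iA iB
        intro α hα
        have : ‖Complex.exp (((α : ℂ) - 1) * L) * (h α : ℂ)‖
            = Real.exp ((α - 1) * L.re) * |h α| := by
          rw [norm_mul, norm_g,
            Complex.norm_real, Real.norm_eq_abs]
        rw [this]
        exact mul_le_mul_of_nonneg_left (hM α hα) (Real.exp_pos _).le
    _ = (∫ α in (0:ℝ)..1, Real.exp ((α - 1) * L.re)) * M := by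
        rw [intervalIntegral.integral_mul_const]
    _ ≤ (1 / L.re) * M := by
        exact mul_le_mul_of_nonneg_right (exp_integral_bound hx) hM0
    _ = M / L.re := by ring

private lemma exp_neg_le {x : ℝ} (hx : 1 ≤ x) : Real.exp (-x) ≤ 27 / x ^ 3 := by
  have h1 : x / 3 ≤ Real.exp (x / 3) := by
    have := Real.add_one_le_exp (x / 3)
    linarith
  have h2 : x ^ 3 / 27 ≤ Real.exp x := by
    have h3 : (x / 3) ^ 3 ≤ Real.exp (x / 3) ^ 3 := by
      apply pow_le_pow_left₀ (by linarith) h1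
    calc x ^ 3 / 27 = (x / 3) ^ 3 := by ring
      _ ≤ Real.exp (x / 3) ^ 3 := h3
      _ = Real.exp x := by rw [← Real.exp_nat_mul]; congr 1; push_cast; ring
  rw [Real.exp_neg, inv_eq_one_div]
  rw [div_le_div_iff₀ (Real.exp_pos x) (by positivity)]
  calc (1 : ℝ) * x ^ 3 = 27 * (x ^ 3 / 27) := by ring
    _ ≤ 27 * Real.exp x := by linarith

/-- `K(p) = ∫₀¹ p^{α-1} μ(α) dα`, with `p^{α-1} = exp((α-1) Log p)` using the
principal branch of the logarithm. -/
noncomputable def Kfun (μ : ℝ → ℝ) (p : ℂ) : ℂ :=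
  ∫ α in (0:ℝ)..1, Complex.exp (((α : ℂ) - 1) * Complex.log p) * (μ α : ℂ)

theorem Kfun_asymp_infty_second_order (μ : ℝ → ℝ)
    (hC3 : ContDiffOn ℝ 3 μ (Set.Icc 0 1)) :
    ∃ C > (0:ℝ), ∃ R > Real.exp 1, ∀ p : ℂ, p ∈ Complex.slitPlane →
      R ≤ ‖p‖ →
      ‖Kfun μ p - (μ 1 : ℂ) / Complex.log p
          + ((derivWithin μ (Set.Icc (0:ℝ) 1) 1 : ℝ) : ℂ) / (Complex.log p) ^ 2‖
        ≤ C / (Real.log ‖p‖) ^ 3 := by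
  have udo : UniqueDiffOn ℝ (Set.Icc (0:ℝ) 1) := uniqueDiffOn_Icc zero_lt_one
  set ν := derivWithin μ (Set.Icc (0:ℝ) 1) with hνdef
  set ν2 := derivWithin ν (Set.Icc (0:ℝ) 1) with hν2def
  have h2 : ContDiffOn ℝ 2 ν (Set.Icc 0 1) := hC3.derivWithin udo (by norm_num)
  have h1 : ContDiffOn ℝ 1 ν2 (Set.Icc 0 1) := h2.derivWithin udo (by norm_num)
  have hμc : ContinuousOn μ (Set.Icc 0 1) := hC3.continuousOn
  have hνc : ContinuousOn ν (Set.Icc 0 1) := h2.continuousOn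
  have hν2c : ContinuousOn ν2 (Set.Icc 0 1) := h1.continuousOn
  have hμd : ∀ α ∈ Set.Icc (0:ℝ) 1, HasDerivWithinAt μ (ν α) (Set.Icc 0 1) α :=
    fun α hα => (hC3.differentiableOn (by norm_num) α hα).hasDerivWithinAt
  have hνd : ∀ α ∈ Set.Icc (0:ℝ) 1, HasDerivWithinAt ν (ν2 α) (Set.Icc 0 1) α :=
    fun α hα => (h2.differentiableOn (by norm_num) α hα).hasDerivWithinAt
  obtain ⟨M, hM⟩ := isCompact_Icc.exists_bound_of_continuousOn hν2c
  set M2 := max M 0 with hM2def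
  have hM20 : 0 ≤ M2 := le_max_right _ _
  have hM2 : ∀ α ∈ Set.Icc (0:ℝ) 1, |ν2 α| ≤ M2 :=
    fun α hα => le_trans (hM α hα) (le_max_left _ _)
  have hm0 : (0:ℝ) ≤ |μ 0| := abs_nonneg _
  have hn0 : (0:ℝ) ≤ |ν 0| := abs_nonneg _
  refine ⟨27 * |μ 0| + 27 * |ν 0| + M2 + 1, by linarith, Real.exp 2,
    Real.exp_lt_exp.mpr one_lt_two, ?_⟩
  intro p _hp hR
  set L := Complex.log p with hLdef
  set x := Real.log ‖p‖ with hxdef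
  set a := ‖L‖ with hadef
  have hpabs : 0 < ‖p‖ := lt_of_lt_of_le (Real.exp_pos 2) hR
  have hx2 : 2 ≤ x := by
    rw [hxdef]
    calc (2:ℝ) = Real.log (Real.exp 2) := (Real.log_exp 2).symm
      _ ≤ Real.log ‖p‖ := Real.log_le_log (Real.exp_pos 2) hR
  have hxre : L.re = x := Complex.log_re p
  have hx1 : (1:ℝ) ≤ x := by linarith
  have hxpos : (0:ℝ) < x := by linarith
  have hL0 : L ≠ 0 := by
    intro h
    rw [h] at hxre
    simp at hxre
    linarith [hxre ▸ hxpos]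
  have hLa : x ≤ a := by
    calc x = L.re := hxre.symm
      _ ≤ |L.re| := le_abs_self _
      _ ≤ a := Complex.abs_re_le_norm L
  have hapos : (0:ℝ) < a := lt_of_lt_of_le hxpos hLa
  have ibp1 := ibp_step μ ν L hμd hμc hνc
  have ibp2 := ibp_step ν ν2 L hνd hνc hν2c
  set J2 := ∫ α in (0:ℝ)..1, Complex.exp (((α : ℂ) - 1) * L) * (ν2 α : ℂ) with hJ2def
  have hK : Kfun μ p = ∫ α in (0:ℝ)..1, Complex.exp (((α : ℂ) - 1) * L) * (μ α : ℂ) := rfl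
  have hE : Kfun μ p - (μ 1 : ℂ) / L + ((ν 1 : ℝ) : ℂ) / L ^ 2
      = (-(L * Complex.exp (-L) * (μ 0 : ℂ)) + Complex.exp (-L) * (ν 0 : ℂ) + J2) / L ^ 2 := by
    rw [hK]
    field_simp
    linear_combination L * ibp1 - ibp2
  have hexp : ‖Complex.exp (-L)‖ = Real.exp (-x) := by
    rw [Complex.norm_exp, Complex.neg_re, hxre]
  have hJ : ‖J2‖ ≤ M2 / x := by
    have h := integral_norm_bound ν2 M2 L (by rw [hxre]; exact hxpos) hν2c hM2
    rwa [hxre] at h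
  have hnum : ‖-(L * Complex.exp (-L) * (μ 0 : ℂ))
        + Complex.exp (-L) * (ν 0 : ℂ) + J2‖
      ≤ a * Real.exp (-x) * |μ 0| + Real.exp (-x) * |ν 0| + M2 / x := by
    calc ‖-(L * Complex.exp (-L) * (μ 0 : ℂ))
          + Complex.exp (-L) * (ν 0 : ℂ) + J2‖
        ≤ ‖-(L * Complex.exp (-L) * (μ 0 : ℂ))
            + Complex.exp (-L) * (ν 0 : ℂ)‖ + ‖J2‖ := norm_add_le _ _
      _ ≤ ‖-(L * Complex.exp (-L) * (μ 0 : ℂ))‖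
          + ‖Complex.exp (-L) * (ν 0 : ℂ)‖ + ‖J2‖ := by
          have := norm_add_le (-(L * Complex.exp (-L) * (μ 0 : ℂ)))
            (Complex.exp (-L) * (ν 0 : ℂ))
          linarith [hJ]
      _ = a * Real.exp (-x) * |μ 0| + Real.exp (-x) * |ν 0| + ‖J2‖ := by
          rw [norm_neg, norm_mul, norm_mul, norm_mul, hexp, Complex.norm_real,
            Complex.norm_real, Real.norm_eq_abs, Real.norm_eq_abs]
      _ ≤ a * Real.exp (-x) * |μ 0| + Real.exp (-x) * |ν 0| + M2 / x := by linarith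
  have he : Real.exp (-x) ≤ 27 / x ^ 3 := exp_neg_le hx1
  have he0 : (0:ℝ) ≤ Real.exp (-x) := (Real.exp_pos _).le
  have t1 : a * Real.exp (-x) * |μ 0| / a ^ 2 ≤ 27 * |μ 0| / x ^ 3 := by
    have h0 : a * Real.exp (-x) * |μ 0| / a ^ 2 = Real.exp (-x) * |μ 0| / a := by
      field_simp
    rw [h0]
    calc Real.exp (-x) * |μ 0| / a ≤ (27 / x ^ 3) * |μ 0| / x := by gcongr
      _ = 27 * |μ 0| / x ^ 4 := by
          rw [div_mul_eq_mul_div, div_div, ← pow_succ]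
      _ ≤ 27 * |μ 0| / x ^ 3 := by
          apply div_le_div_of_nonneg_left (by positivity) (by positivity)
          exact pow_le_pow_right₀ hx1 (by norm_num)
  have t2 : Real.exp (-x) * |ν 0| / a ^ 2 ≤ 27 * |ν 0| / x ^ 3 := by
    calc Real.exp (-x) * |ν 0| / a ^ 2 ≤ (27 / x ^ 3) * |ν 0| / x ^ 2 := by gcongr
      _ = 27 * |ν 0| / x ^ 5 := by
          rw [div_mul_eq_mul_div, div_div, ← pow_add]
      _ ≤ 27 * |ν 0| / x ^ 3 := by
          apply div_le_div_of_nonneg_left (by positivity) (by positivity)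
          exact pow_le_pow_right₀ hx1 (by norm_num)
  have t3 : (M2 / x) / a ^ 2 ≤ M2 / x ^ 3 := by
    calc (M2 / x) / a ^ 2 ≤ (M2 / x) / x ^ 2 := by gcongr
      _ = M2 / x ^ 3 := by rw [div_div, ← pow_succ']
  rw [hE, norm_div, norm_pow]
  calc ‖-(L * Complex.exp (-L) * (μ 0 : ℂ))
        + Complex.exp (-L) * (ν 0 : ℂ) + J2‖ / a ^ 2
      ≤ (a * Real.exp (-x) * |μ 0| + Real.exp (-x) * |ν 0| + M2 / x) / a ^ 2 := by gcongr
    _ = a * Real.exp (-x) * |μ 0| / a ^ 2 + Real.exp (-x) * |ν 0| / a ^ 2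
        + (M2 / x) / a ^ 2 := by ring
    _ ≤ 27 * |μ 0| / x ^ 3 + 27 * |ν 0| / x ^ 3 + M2 / x ^ 3 := by linarith
    _ = (27 * |μ 0| + 27 * |ν 0| + M2) / x ^ 3 := by ring
    _ ≤ (27 * |μ 0| + 27 * |ν 0| + M2 + 1) / x ^ 3 := by
        apply div_le_div_of_nonneg_right ?_ ?_ <;> first | linarith | positivity
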